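/- The system matrix of a linear quantum system satisfies A + A^♭ + C_f^♭ C_f = 0, where A = -Δ(iΩ_-, iΩ_+) - Δ(Γ_-, Γ_+), C_f = Δ(C_-, C_+), Γ_∓ = (1/2)(C_-† C_∓ - C_+^T C_±^#), for any Ω_- Hermitian, Ω_+ symmetric, and C_-, C_+ ∈ ℂ^{m×n}. -/
import Mathlib


open Matrix Complex

noncomputable def Jmat (n : ℕ) : Matrix (Fin n ⊕ Fin n) (Fin n ⊕ Fin n) ℂ :=
  Matrix.fromBlocks 1 0 0 (-1)

noncomputable def flat {n m : ℕ}
    (X : Matrix (Fin n ⊕ Fin n) (Fin m ⊕ Fin m) ℂ) :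
    Matrix (Fin m ⊕ Fin m) (Fin n ⊕ Fin n) ℂ :=
  Jmat m * Xᴴ * Jmat n

noncomputable def dup {r k : ℕ} (U V : Matrix (Fin r) (Fin k) ℂ) :
    Matrix (Fin r ⊕ Fin r) (Fin k ⊕ Fin k) ℂ :=
  Matrix.fromBlocks U V (V.map (starRingEnd ℂ)) (U.map (starRingEnd ℂ))

namespace RealizAux

lemma conj_hT {r k : ℕ} (X : Matrix (Fin r) (Fin k) ℂ) :
    (X.map (starRingEnd ℂ))ᴴ = Xᵀ := by
  ext i j
  simp [Matrix.conjTranspose_apply, Matrix.map_apply, Matrix.transpose_apply]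

lemma conj_Th {r k : ℕ} (X : Matrix (Fin r) (Fin k) ℂ) :
    (Xᵀ)ᴴ = X.map (starRingEnd ℂ) := by
  ext i j
  simp [Matrix.conjTranspose_apply, Matrix.map_apply, Matrix.transpose_apply]

lemma conj_mul {r k l : ℕ} (X : Matrix (Fin r) (Fin k) ℂ) (Y : Matrix (Fin k) (Fin l) ℂ) :
    (X * Y).map (starRingEnd ℂ) = X.map (starRingEnd ℂ) * Y.map (starRingEnd ℂ) :=
  Matrix.map_mul

lemma conj_add {r k : ℕ} (X Y : Matrix (Fin r) (Fin k) ℂ) :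
    (X + Y).map (starRingEnd ℂ) = X.map (starRingEnd ℂ) + Y.map (starRingEnd ℂ) := by
  ext i j; simp

lemma conj_conj {r k : ℕ} (X : Matrix (Fin r) (Fin k) ℂ) :
    (X.map (starRingEnd ℂ)).map (starRingEnd ℂ) = X := by
  ext i j; simp

lemma conj_neg {r k : ℕ} (X : Matrix (Fin r) (Fin k) ℂ) :
    (-X).map (starRingEnd ℂ) = -X.map (starRingEnd ℂ) := by
  ext i j; simp

lemma conj_T {r k : ℕ} (X : Matrix (Fin r) (Fin k) ℂ) :
    Xᵀ.map (starRingEnd ℂ) = Xᴴ := rfl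

lemma conj_H {r k : ℕ} (X : Matrix (Fin r) (Fin k) ℂ) :
    Xᴴ.map (starRingEnd ℂ) = Xᵀ := by
  ext i j; simp [Matrix.conjTranspose_apply]

lemma flat_dup {r k : ℕ} (U V : Matrix (Fin r) (Fin k) ℂ) :
    flat (dup U V) = dup Uᴴ (-Vᵀ) := by
  unfold flat dup Jmat
  rw [Matrix.fromBlocks_conjTranspose, Matrix.fromBlocks_multiply,
    Matrix.fromBlocks_multiply]
  simp [conj_hT, conj_Th, conj_neg, conj_T, conj_H]

lemma dup_mul {r k l : ℕ} (U V : Matrix (Fin r) (Fin k) ℂ)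
    (X Y : Matrix (Fin k) (Fin l) ℂ) :
    dup U V * dup X Y =
      dup (U * X + V * Y.map (starRingEnd ℂ)) (U * Y + V * X.map (starRingEnd ℂ)) := by
  unfold dup
  rw [Matrix.fromBlocks_multiply]
  rw [conj_add, conj_mul, conj_mul, conj_add, conj_mul, conj_mul, conj_conj, conj_conj]
  congr 1 <;> abel

lemma dup_add {r k : ℕ} (U V X Y : Matrix (Fin r) (Fin k) ℂ) :
    dup U V + dup X Y = dup (U + X) (V + Y) := by
  unfold dup
  rw [Matrix.fromBlocks_add, conj_add, conj_add]

lemma dup_zero {r k : ℕ} : dup (0 : Matrix (Fin r) (Fin k) ℂ) 0 = 0 := by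
  unfold dup
  simp [Matrix.fromBlocks_zero]

lemma neg_dup {r k : ℕ} (U V : Matrix (Fin r) (Fin k) ℂ) :
    -dup U V = dup (-U) (-V) := by
  unfold dup
  rw [Matrix.fromBlocks_neg, conj_neg, conj_neg]

end RealizAux

open RealizAux in
theorem realizability_identity {n m : ℕ}
    (Ωm Ωp : Matrix (Fin n) (Fin n) ℂ)
    (hΩm : Ωm = Ωmᴴ) (hΩp : Ωp = Ωpᵀ)
    (Cm Cp : Matrix (Fin m) (Fin n) ℂ)
    (Γm Γp : Matrix (Fin n) (Fin n) ℂ)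
    (hΓm : Γm = (1/2 : ℂ) • (Cmᴴ * Cm - Cpᵀ * Cp.map (starRingEnd ℂ)))
    (hΓp : Γp = (1/2 : ℂ) • (Cmᴴ * Cp - Cpᵀ * Cm.map (starRingEnd ℂ)))
    (A : Matrix (Fin n ⊕ Fin n) (Fin n ⊕ Fin n) ℂ)
    (hA : A = -dup (Complex.I • Ωm) (Complex.I • Ωp) - dup Γm Γp)
    (Cf : Matrix (Fin m ⊕ Fin m) (Fin n ⊕ Fin n) ℂ)
    (hCf : Cf = dup Cm Cp) :
    A + flat A + flat Cf * Cf = 0 := by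
  have hA' : A = dup (-(Complex.I • Ωm) - Γm) (-(Complex.I • Ωp) - Γp) := by
    rw [hA, sub_eq_add_neg, neg_dup, neg_dup, dup_add]
    congr 1 <;> ring_nf
  rw [hA', hCf, flat_dup, flat_dup, dup_mul, dup_add, dup_add]
  have hΓmh : Γmᴴ = Γm := by
    rw [hΓm]
    rw [Matrix.conjTranspose_smul, Matrix.conjTranspose_sub, Matrix.conjTranspose_mul,
      Matrix.conjTranspose_mul, conj_hT, conj_Th, Matrix.conjTranspose_conjTranspose]
    simp
  have hΓpt : Γpᵀ = -Γp := by
    rw [hΓp]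
    rw [Matrix.transpose_smul, Matrix.transpose_sub, Matrix.transpose_mul,
      Matrix.transpose_mul, Matrix.transpose_transpose]
    have h1 : (Cmᴴ)ᵀ = Cm.map (starRingEnd ℂ) := by
      ext i j; simp [Matrix.conjTranspose_apply, Matrix.transpose_apply, Matrix.map_apply]
    have h2 : ((Cm.map (starRingEnd ℂ))ᵀ : Matrix (Fin n) (Fin m) ℂ) = Cmᴴ := by
      ext i j; simp [Matrix.conjTranspose_apply, Matrix.transpose_apply, Matrix.map_apply]
    rw [h1, h2]
    rw [smul_sub, smul_sub, neg_sub]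
  have e1 : -(Complex.I • Ωm) - Γm + (-(Complex.I • Ωm) - Γm)ᴴ +
      (Cmᴴ * Cm + -Cpᵀ * Cp.map (starRingEnd ℂ)) = 0 := by
    rw [Matrix.conjTranspose_sub, Matrix.conjTranspose_neg, Matrix.conjTranspose_smul,
      ← hΩm, hΓmh]
    rw [hΓm]
    simp only [Complex.star_def, Complex.conj_I, neg_smul, neg_neg, neg_mul, Matrix.neg_mul]
    module
  have e2 : -(Complex.I • Ωp) - Γp + -(-(Complex.I • Ωp) - Γp)ᵀ +
      (Cmᴴ * Cp + -Cpᵀ * Cm.map (starRingEnd ℂ)) = 0 := by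
    rw [Matrix.transpose_sub, Matrix.transpose_neg, Matrix.transpose_smul, ← hΩp, hΓpt]
    rw [hΓp]
    simp only [neg_mul, Matrix.neg_mul]
    module
  rw [e1, e2, dup_zero]
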